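/- Let A be a noetherian ring complete with respect to an ideal I, S a profinite set, and J ⊆ A an ideal. Then C(S,J) := {f ∈ C(S,A) : f(s) ∈ J for all s} is a closed ideal of C(S,A) with respect to the I-adic topology on C(S,A), and C(S,A)/C(S,J) ≅ C(S, A/J). -/

import Mathlib

open Topology Filter


/-- The ideal `C(S,J)` of continuous functions `S → A` taking all values in the ideal `J`. -/
def contIdeal (S : Type*) [TopologicalSpace S]
    (A : Type*) [CommRing A] [TopologicalSpace A] [IsTopologicalRing A] (J : Ideal A) :
    Ideal C(S, A) where
  carrier := {f | ∀ s, f s ∈ J}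
  add_mem' hf hg s := J.add_mem (hf s) (hg s)
  zero_mem' s := J.zero_mem
  smul_mem' c f hf s := J.mul_mem_left (c s) (hf s)

/-- A function which is locally constant (in the sense that every point has an open
neighbourhood on which the function is constant) is continuous. -/
theorem continuous_of_locally_eq {X Y : Type*} [TopologicalSpace X] [TopologicalSpace Y]
    {f : X → Y} (h : ∀ s, ∃ U : Set X, IsOpen U ∧ s ∈ U ∧ ∀ t ∈ U, f t = f s) :
    Continuous f := by
  rw [continuous_def]
  intro V _
  rw [isOpen_iff_forall_mem_open]
  intro s hs
  obtain ⟨U, hU, hsU, hconst⟩ := h s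
  exact ⟨U, fun t ht => by rw [Set.mem_preimage, hconst t ht]; exact hs, hU, hsU⟩

set_option maxHeartbeats 2000000

/-- Let `A` be a noetherian ring, complete with respect to an ideal `I` (with the `I`-adic
topology), `S` a profinite set, and `J ⊆ A` an ideal.  Then
`C(S,J) = {f ∈ C(S,A) : f(s) ∈ J for all s}` is an ideal of `C(S,A)` which is closed for the
`I`-adic topology on `C(S,A)` (i.e. it equals the intersection of the `C(S,J) + I^n·C(S,A)`),
and `C(S,A)/C(S,J)` is isomorphic as a ring to `C(S, A/J)`, where `A/J` carries the quotient
(`I`-adic) topology. -/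
theorem contIdeal_closed_and_quotient_iso
    (A : Type*) [CommRing A] [IsNoetherianRing A] [TopologicalSpace A] [IsTopologicalRing A]
    (I : Ideal A) (hA : IsAdic I) [IsAdicComplete I A]
    (S : Type*) [TopologicalSpace S] [CompactSpace S] [T2Space S] [TotallyDisconnectedSpace S]
    (J : Ideal A) :
    (∀ g : C(S, A),
        (∀ n : ℕ, g ∈ contIdeal S A J ⊔ Ideal.map (algebraMap A C(S, A)) (I ^ n)) →
        g ∈ contIdeal S A J) ∧
    (letI : TopologicalSpace (A ⧸ J) := (I.map (Ideal.Quotient.mk J)).adicTopology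
     haveI : IsTopologicalRing (A ⧸ J) :=
       (Ideal.nonarchimedean (I.map (Ideal.Quotient.mk J))).toIsTopologicalRing
     Nonempty ((C(S, A) ⧸ contIdeal S A J) ≃+* C(S, A ⧸ J))) := by
  classical
  set Q : Ideal (A ⧸ J) := I.map (Ideal.Quotient.mk J) with hQdef
  obtain ⟨hIopen, hInhds⟩ := isAdic_iff.mp hA
  -- mapping powers of `I` into powers of `Q`
  have hmapn : ∀ (n : ℕ) (x : A), x ∈ (I ^ n : Ideal A) →
      Ideal.Quotient.mk J x ∈ Q ^ n := by
    intro n x hx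
    have := Ideal.mem_map_of_mem (Ideal.Quotient.mk J) hx
    rwa [Ideal.map_pow] at this
  -- Krull intersection theorem in `A ⧸ J`
  have krull : ∀ x : A ⧸ J, (∀ n : ℕ, x ∈ Q ^ n) → x = 0 := by
    intro x hx
    have hx' : x ∈ (⨅ i : ℕ, Q ^ i • ⊤ : Submodule (A ⧸ J) (A ⧸ J)) := by
      rw [Submodule.mem_iInf]
      intro i
      simpa [smul_eq_mul, Ideal.mul_top] using hx i
    obtain ⟨r, hr⟩ := (Ideal.mem_iInf_smul_pow_eq_bot_iff Q x).mp hx'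
    obtain ⟨a, haI, ha⟩ :=
      (Ideal.mem_map_iff_of_surjective _ Ideal.Quotient.mk_surjective).mp r.2
    have hu : IsUnit (1 - a) := by
      have := Ideal.mem_jacobson_bot.mp (IsAdicComplete.le_jacobson_bot I haI) (-1)
      rwa [show a * (-1) + 1 = 1 - a by ring] at this
    have hu' : IsUnit ((Ideal.Quotient.mk J) (1 - a)) := hu.map _
    have hz : ((Ideal.Quotient.mk J) (1 - a)) * x = 0 := by
      have hrx : (r : A ⧸ J) * x = x := by simpa [smul_eq_mul] using hr
      rw [map_sub, map_one, ha, sub_mul, one_mul, hrx, sub_self]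
    exact ((IsUnit.mul_right_eq_zero hu').mp hz)
  -- pointwise closedness
  have memJ_of_forall : ∀ x : A, (∀ n : ℕ, x ∈ J ⊔ I ^ n) → x ∈ J := by
    intro x hx
    have h1 : ∀ n : ℕ, (Ideal.Quotient.mk J) x ∈ Q ^ n := by
      intro n
      have := Ideal.mem_map_of_mem (Ideal.Quotient.mk J) (hx n)
      rwa [Ideal.map_sup, Ideal.map_quotient_self, bot_sup_eq, Ideal.map_pow] at this
    have := krull _ h1
    rwa [Ideal.Quotient.eq_zero_iff_mem] at this
  constructor
  · -- Part 1: closedness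
    intro g hg s
    apply memJ_of_forall
    intro n
    obtain ⟨a, ha, b, hb, hab⟩ := Submodule.mem_sup.mp (hg n)
    have hbs : b s ∈ (I ^ n : Ideal A) := by
      let ev : C(S, A) →+* A := (Pi.evalRingHom (fun _ : S => A) s).comp
        ContinuousMap.coeFnRingHom
      have hle : Ideal.map (algebraMap A C(S, A)) (I ^ n) ≤ Ideal.comap ev (I ^ n) := by
        rw [Ideal.map_le_iff_le_comap]
        intro x hx
        simpa [ev, Ideal.mem_comap] using hx
      exact hle hb
    have hgs : g s = a s + b s := by rw [← hab]; rfl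
    rw [hgs]
    exact Submodule.add_mem _ (Ideal.mem_sup_left (ha s)) (Ideal.mem_sup_right hbs)
  · -- Part 2: the isomorphism
    letI : TopologicalSpace (A ⧸ J) := Q.adicTopology
    haveI : IsTopologicalRing (A ⧸ J) := (Ideal.nonarchimedean Q).toIsTopologicalRing
    haveI hqag : IsTopologicalAddGroup (A ⧸ J) := IsTopologicalRing.to_topologicalAddGroup
    haveI : ContinuousSub (A ⧸ J) := inferInstance
    haveI : ContinuousAdd (A ⧸ J) := ContinuousAdd.mk continuous_add
    show Nonempty ((C(S, A) ⧸ contIdeal S A J) ≃+* C(S, A ⧸ J))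
    have hQadic : IsAdic Q := rfl
    obtain ⟨hQopen, hQnhds⟩ := isAdic_iff.mp hQadic
    -- the quotient map is continuous
    have hmkc : Continuous (Ideal.Quotient.mk J) := by
      refine continuous_of_continuousAt_zero (Ideal.Quotient.mk J) ?_
      unfold ContinuousAt
      rw [map_zero, Filter.tendsto_def]
      intro W hW
      obtain ⟨m, hm⟩ := hQnhds W hW
      refine Filter.mem_of_superset ((hIopen m).mem_nhds ?_) ?_
      · exact Submodule.zero_mem _
      · intro x hx
        exact hm (hmapn m x hx)
    set Φ : C(S, A) →+* C(S, A ⧸ J) :=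
      RingHom.compLeftContinuous S (Ideal.Quotient.mk J) hmkc with hΦdef
    have hΦapp : ∀ (F : C(S, A)) (s : S), Φ F s = Ideal.Quotient.mk J (F s) := fun _ _ => rfl
    -- kernel
    have hker : RingHom.ker Φ = contIdeal S A J := by
      ext F
      constructor
      · intro hF s
        have := congrFun (congrArg (fun u : C(S, A ⧸ J) => (u : S → A ⧸ J))
          (RingHom.mem_ker.mp hF)) s
        simpa [hΦapp, Ideal.Quotient.eq_zero_iff_mem] using this
      · intro hF
        rw [RingHom.mem_ker]
        ext s
        simpa [hΦapp, Ideal.Quotient.eq_zero_iff_mem] using hF s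
    -- surjectivity
    have hsurj : Function.Surjective Φ := by
      intro g
      -- Step 1: approximation at each level
      have step1 : ∀ n : ℕ, ∃ h : C(S, A),
          ∀ s, g s - Ideal.Quotient.mk J (h s) ∈ Q ^ n := by
        intro n
        set π : A →+* (A ⧸ J) ⧸ (Q ^ n) :=
          (Ideal.Quotient.mk (Q ^ n)).comp (Ideal.Quotient.mk J) with hπdef
        have hπ : Function.Surjective π :=
          Ideal.Quotient.mk_surjective.comp Ideal.Quotient.mk_surjective
        set c : (A ⧸ J) ⧸ (Q ^ n) → A := Function.surjInv hπ with hcdef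
        have hc : ∀ y, π (c y) = y := fun y => Function.surjInv_eq hπ y
        set h0 : S → A := fun s => c (Ideal.Quotient.mk (Q ^ n) (g s)) with hh0def
        have hcont : Continuous h0 := by
          apply continuous_of_locally_eq
          intro s
          refine ⟨g ⁻¹' ((fun y => y - g s) ⁻¹' (Q ^ n : Ideal (A ⧸ J))), ?_, ?_, ?_⟩
          · exact ((hQopen n).preimage (continuous_id.sub continuous_const)).preimage
              g.continuous
          · simp [Submodule.zero_mem]
          · intro t ht
            have : Ideal.Quotient.mk (Q ^ n) (g t) = Ideal.Quotient.mk (Q ^ n) (g s) :=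
              (Ideal.Quotient.mk_eq_mk_iff_sub_mem _ _).mpr ht
            simp [hh0def, this]
        refine ⟨⟨h0, hcont⟩, fun s => ?_⟩
        have h1 : Ideal.Quotient.mk (Q ^ n) (Ideal.Quotient.mk J (h0 s)) =
            Ideal.Quotient.mk (Q ^ n) (g s) := hc _
        have h2 : Ideal.Quotient.mk J (h0 s) - g s ∈ Q ^ n :=
          (Ideal.Quotient.mk_eq_mk_iff_sub_mem _ _).mp h1
        have := Submodule.neg_mem _ h2
        rwa [neg_sub] at this
      -- Step 1.5: splitting off the `I^n`-part of a function with values in `J + I^n`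
      have split : ∀ (n : ℕ) (w : C(S, A)), (∀ s, w s ∈ J ⊔ I ^ n) →
          ∃ v : C(S, A), (∀ s, v s ∈ (I ^ n : Ideal A)) ∧ ∀ s, w s - v s ∈ J := by
        intro n w hw
        set ρ : S → A ⧸ (I ^ n) := fun s => Ideal.Quotient.mk (I ^ n) (w s) with hρdef
        set α : A ⧸ (I ^ n) → A := fun y =>
          if h : ∃ a, a ∈ J ∧ Ideal.Quotient.mk (I ^ n) a = y then h.choose else 0 with hαdef
        have hα : ∀ (y) (h : ∃ a, a ∈ J ∧ Ideal.Quotient.mk (I ^ n) a = y),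
            α y ∈ J ∧ Ideal.Quotient.mk (I ^ n) (α y) = y := by
          intro y h
          simp only [hαdef, dif_pos h]
          exact ⟨h.choose_spec.1, h.choose_spec.2⟩
        have hex : ∀ s, ∃ a, a ∈ J ∧ Ideal.Quotient.mk (I ^ n) a = ρ s := by
          intro s
          obtain ⟨a, haJ, b, hbI, hab⟩ := Submodule.mem_sup.mp (hw s)
          refine ⟨a, haJ, ?_⟩
          have : Ideal.Quotient.mk (I ^ n) b = 0 := Ideal.Quotient.eq_zero_iff_mem.mpr hbI
          show Ideal.Quotient.mk (I ^ n) a = Ideal.Quotient.mk (I ^ n) (w s)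
          rw [← hab, map_add, this, add_zero]
        set u : S → A := fun s => α (ρ s) with hudef
        have hucont : Continuous u := by
          apply continuous_of_locally_eq
          intro s
          refine ⟨(fun t => w t) ⁻¹' ((fun y => y - w s) ⁻¹' (I ^ n : Ideal A)), ?_, ?_, ?_⟩
          · exact ((hIopen n).preimage (continuous_id.sub continuous_const)).preimage
              w.continuous
          · simp [Submodule.zero_mem]
          · intro t ht
            have : ρ t = ρ s := (Ideal.Quotient.mk_eq_mk_iff_sub_mem _ _).mpr ht
            simp [hudef, this]
        refine ⟨⟨fun s => w s - u s, w.continuous.sub hucont⟩, ?_, ?_⟩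
        · intro s
          have h1 := hα (ρ s) (hex s)
          have h2 : Ideal.Quotient.mk (I ^ n) (w s - u s) = 0 := by
            rw [map_sub, h1.2, hρdef, sub_self]
          exact Ideal.Quotient.eq_zero_iff_mem.mp h2
        · intro s
          have h1 := hα (ρ s) (hex s)
          simpa [sub_sub_cancel] using h1.1
      -- Step 2: inductive construction of the approximating sequence
      have key : ∀ (n : ℕ) (F : C(S, A)), (∀ s, g s - Ideal.Quotient.mk J (F s) ∈ Q ^ n) →
          ∃ F' : C(S, A), (∀ s, g s - Ideal.Quotient.mk J (F' s) ∈ Q ^ (n + 1)) ∧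
            ∀ s, F' s - F s ∈ (I ^ n : Ideal A) := by
        intro n F hF
        obtain ⟨h, hh⟩ := step1 (n + 1)
        have hw : ∀ s, (h - F) s ∈ J ⊔ I ^ n := by
          intro s
          have h1 : Ideal.Quotient.mk J (h s - F s) ∈ Q ^ n := by
            have heq : Ideal.Quotient.mk J (h s - F s) =
                (g s - Ideal.Quotient.mk J (F s)) - (g s - Ideal.Quotient.mk J (h s)) := by
              rw [map_sub]; ring
            rw [heq]
            exact Submodule.sub_mem _ (hF s)
              (Ideal.pow_le_pow_right (Nat.le_succ n) (hh s))
          have hcomap : Ideal.comap (Ideal.Quotient.mk J) (Q ^ n) = J ⊔ I ^ n := by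
            rw [← Ideal.map_pow, Ideal.comap_map_of_surjective _ Ideal.Quotient.mk_surjective,
              sup_comm]
            congr 1
            rw [← RingHom.ker_eq_comap_bot, Ideal.mk_ker]
          have : h s - F s ∈ Ideal.comap (Ideal.Quotient.mk J) (Q ^ n) := h1
          rw [hcomap] at this
          simpa using this
        obtain ⟨v, hv1, hv2⟩ := split n (h - F) hw
        refine ⟨F + v, ?_, ?_⟩
        · intro s
          have hJmem : (F s + v s) - h s ∈ J := by
            have := Submodule.neg_mem _ (hv2 s)
            have heq : (F s + v s) - h s = -((h - F) s - v s) := by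
              simp only [ContinuousMap.sub_apply]; ring
            rw [heq]
            exact this
          have hmk : Ideal.Quotient.mk J ((F + v) s) = Ideal.Quotient.mk J (h s) := by
            simp only [ContinuousMap.add_apply]
            exact (Ideal.Quotient.mk_eq_mk_iff_sub_mem _ _).mpr hJmem
          rw [hmk]
          exact hh s
        · intro s
          simpa [ContinuousMap.add_apply, add_sub_cancel_left] using hv1 s
      -- the sequence
      let G : ∀ n : ℕ, {F : C(S, A) // ∀ s, g s - Ideal.Quotient.mk J (F s) ∈ Q ^ n} :=
        fun n => Nat.rec
          ⟨0, fun s => by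
            simpa [pow_zero, Ideal.one_eq_top] using Submodule.mem_top (R := A ⧸ J)⟩
          (fun n G => ⟨(key n G.1 G.2).choose, (key n G.1 G.2).choose_spec.1⟩) n
      have hGstep : ∀ n s, (G (n + 1)).1 s - (G n).1 s ∈ (I ^ n : Ideal A) := fun n s =>
        (key n (G n).1 (G n).2).choose_spec.2 s
      have htel : ∀ (s : S) (m n : ℕ), m ≤ n →
          (G n).1 s - (G m).1 s ∈ (I ^ m : Ideal A) := by
        intro s m n h
        induction n, h using Nat.le_induction with
        | base => simpa [sub_self] using Submodule.zero_mem (I ^ m : Ideal A)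
        | succ n hmn ih =>
          have h1 := hGstep n s
          have h2 : (G (n + 1)).1 s - (G m).1 s =
              ((G (n + 1)).1 s - (G n).1 s) + ((G n).1 s - (G m).1 s) := by ring
          rw [h2]
          exact Submodule.add_mem _ (Ideal.pow_le_pow_right hmn h1) ih
      -- the limit
      have hlim : ∀ s : S, ∃ L : A, ∀ n, L - (G n).1 s ∈ (I ^ n : Ideal A) := by
        intro s
        obtain ⟨L, hL⟩ := IsPrecomplete.prec
          (IsAdicComplete.toIsPrecomplete (I := I) (M := A))
          (f := fun n => (G n).1 s) (by
            intro m n h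
            rw [SModEq.sub_mem]
            have := Submodule.neg_mem _ (htel s m n h)
            rw [neg_sub] at this
            simpa [smul_eq_mul, Ideal.mul_top] using this)
        refine ⟨L, fun n => ?_⟩
        have := hL n
        rw [SModEq.sub_mem] at this
        have h2 : (G n).1 s - L ∈ (I ^ n : Ideal A) := by
          simpa [smul_eq_mul, Ideal.mul_top] using this
        have := Submodule.neg_mem _ h2
        rwa [neg_sub] at this
      choose f hf using hlim
      -- continuity of the limit
      have hfc : Continuous f := by
        rw [continuous_iff_continuousAt]
        intro s
        unfold ContinuousAt
        rw [Filter.tendsto_def]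
        intro W hW
        have hW0 : (fun x : A => x + f s) ⁻¹' W ∈ 𝓝 (0 : A) := by
          have hc : ContinuousAt (fun x : A => x + f s) 0 :=
            (continuous_id.add continuous_const).continuousAt
          exact hc.preimage_mem_nhds (by simpa using hW)
        obtain ⟨n, hn⟩ := hInhds _ hW0
        have hU : IsOpen {t : S | (G n).1 t - (G n).1 s ∈ (I ^ n : Ideal A)} :=
          ((hIopen n).preimage (continuous_id.sub continuous_const)).preimage
            (G n).1.continuous
        refine Filter.mem_of_superset (hU.mem_nhds ?_) ?_
        · show (G n).1 s - (G n).1 s ∈ (I ^ n : Ideal A)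
          simpa [sub_self] using Submodule.zero_mem (I ^ n : Ideal A)
        · intro t ht
          have hmem : f t - f s ∈ (I ^ n : Ideal A) := by
            have h1 := hf t n
            have h2 := Submodule.neg_mem _ (hf s n)
            have heq : f t - f s = (f t - (G n).1 t) + ((G n).1 t - (G n).1 s) +
                -(f s - (G n).1 s) := by ring
            rw [heq]
            exact Submodule.add_mem _ (Submodule.add_mem _ h1 ht) h2
          have := hn hmem
          simpa [sub_add_cancel] using this
      -- the limit maps to `g`
      have hfg : ∀ s, Ideal.Quotient.mk J (f s) = g s := by
        intro s
        have hz : ∀ n : ℕ, Ideal.Quotient.mk J (f s) - g s ∈ Q ^ n := by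
          intro n
          have h1 : Ideal.Quotient.mk J (f s - (G n).1 s) ∈ Q ^ n := hmapn n _ (hf s n)
          have h2 := (G n).2 s
          have heq : Ideal.Quotient.mk J (f s) - g s =
              Ideal.Quotient.mk J (f s - (G n).1 s) -
                (g s - Ideal.Quotient.mk J ((G n).1 s)) := by
            rw [map_sub]; ring
          rw [heq]
          exact Submodule.sub_mem _ h1 h2
        exact sub_eq_zero.mp (krull _ hz)
      exact ⟨⟨f, hfc⟩, ContinuousMap.ext fun s => hfg s⟩
    exact ⟨(Ideal.quotEquivOfEq hker.symm).trans (RingHom.quotientKerEquivOfSurjective hsurj)⟩
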